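/- Let I = (i_1 < i_2 < ... < i_k) be a strictly increasing sequence of nonnegative integers. Then the k×k determinant det(1/(i_j - g + k + 1 - i)!)_{1≤i,j≤k} (with rows indexed by i = 1,...,k so that the (i,j) entry is 1/(i_j - g + k + 1 - i)! , interpreted as 0 when the argument of the factorial is negative) equals (∏_{1≤j<ℓ≤k} (i_ℓ - i_j)) / (∏_{j=1}^k (i_j - g + k)!), provided i_1 ≥ g - k. -/

import Mathlib

open Finset Polynomial Matrix


/-- For a strictly increasing sequence `i_1 < ... < i_k` of
nonnegative integers with `i_1 ≥ g - k`, the `k×k` determinant with `(a,b)` entry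
`1/(i_b - g + k + 1 - a)!` (rows `a = 1,…,k`; the reciprocal factorial interpreted
as `0` when the argument is negative) equals
`(∏_{j<ℓ} (i_ℓ - i_j)) / (∏_j (i_j - g + k)!)`. -/
theorem det_reciprocal_factorials (k : ℕ) (hk : 1 ≤ k) (g : ℤ)
    (i : Fin k → ℕ) (hmono : StrictMono i)
    (hfirst : g - k ≤ (i ⟨0, hk⟩ : ℤ)) :
    Matrix.det (Matrix.of fun a b : Fin k =>
      if h : 0 ≤ (i b : ℤ) - g + k + 1 - ((a : ℕ) + 1)
      then (1 : ℚ) / (Nat.factorial ((i b : ℤ) - g + k + 1 - ((a : ℕ) + 1)).toNat)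
      else 0) =
    (∏ p ∈ Finset.univ.filter (fun p : Fin k × Fin k => p.1 < p.2),
        (((i p.2 : ℤ) - (i p.1 : ℤ) : ℤ) : ℚ)) /
      ∏ j : Fin k, (Nat.factorial ((i j : ℤ) - g + k).toNat : ℚ) := by
  set m : Fin k → ℕ := fun j => ((i j : ℤ) - g + k).toNat with hmdef
  have hnn : ∀ j : Fin k, 0 ≤ (i j : ℤ) - g + k := by
    intro j
    have h0 : i ⟨0, hk⟩ ≤ i j := hmono.monotone (by exact Fin.mk_le_of_le_val (Nat.zero_le _))
    have : (i ⟨0, hk⟩ : ℤ) ≤ (i j : ℤ) := by exact_mod_cast h0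
    linarith
  have hm : ∀ j : Fin k, (m j : ℤ) = (i j : ℤ) - g + k := fun j =>
    Int.toNat_of_nonneg (hnn j)
  -- rewrite entries
  have hentry : ∀ a b : Fin k,
      (if h : 0 ≤ (i b : ℤ) - g + k + 1 - ((a : ℕ) + 1)
        then (1 : ℚ) / (Nat.factorial ((i b : ℤ) - g + k + 1 - ((a : ℕ) + 1)).toNat)
        else 0)
      = (1 / (Nat.factorial (m b) : ℚ)) * (Nat.descFactorial (m b) (a : ℕ) : ℚ) := by
    intro a b
    have harg : (i b : ℤ) - g + k + 1 - ((a : ℕ) + 1) = (m b : ℤ) - (a : ℕ) := by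
      rw [hm b]; ring
    by_cases hle : (a : ℕ) ≤ m b
    · have hpos : 0 ≤ (i b : ℤ) - g + k + 1 - ((a : ℕ) + 1) := by
        rw [harg]; omega
      rw [dif_pos hpos]
      have htn : ((i b : ℤ) - g + k + 1 - ((a : ℕ) + 1)).toNat = m b - (a : ℕ) := by
        omega
      rw [htn]
      have hfac := Nat.factorial_mul_descFactorial hle
      have h1 : (Nat.factorial (m b - (a : ℕ)) : ℚ) * (Nat.descFactorial (m b) (a : ℕ) : ℚ)
          = (Nat.factorial (m b) : ℚ) := by exact_mod_cast congrArg (Nat.cast : ℕ → ℚ) hfac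
      have h2 : (Nat.factorial (m b - (a : ℕ)) : ℚ) ≠ 0 := by
        exact_mod_cast Nat.factorial_ne_zero _
      have h3 : (Nat.factorial (m b) : ℚ) ≠ 0 := by
        exact_mod_cast Nat.factorial_ne_zero _
      field_simp
      linarith [h1]
    · have hneg : ¬ 0 ≤ (i b : ℤ) - g + k + 1 - ((a : ℕ) + 1) := by
        rw [harg]; omega
      rw [dif_neg hneg, Nat.descFactorial_eq_zero_iff_lt.mpr (by omega), Nat.cast_zero, mul_zero]
  have hdet1 : Matrix.det (Matrix.of fun a b : Fin k =>
      if h : 0 ≤ (i b : ℤ) - g + k + 1 - ((a : ℕ) + 1)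
      then (1 : ℚ) / (Nat.factorial ((i b : ℤ) - g + k + 1 - ((a : ℕ) + 1)).toNat)
      else 0)
      = Matrix.det (Matrix.of fun a b : Fin k =>
          (1 / (Nat.factorial (m b) : ℚ)) * (Nat.descFactorial (m b) (a : ℕ) : ℚ)) := by
    congr 1; ext a b; exact hentry a b
  rw [hdet1, Matrix.det_mul_row (fun b => 1 / (Nat.factorial (m b) : ℚ))
    (fun a b : Fin k => (Nat.descFactorial (m b) (a : ℕ) : ℚ))]
  -- identify with evaluated descPochhammer polynomials
  have hD : Matrix.det (Matrix.of fun a b : Fin k =>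
        (Nat.descFactorial (m b) (a : ℕ) : ℚ))
      = Matrix.det (Matrix.vandermonde fun j : Fin k => (m j : ℚ)) := by
    rw [← Matrix.det_transpose]
    have : (Matrix.of fun a b : Fin k => (Nat.descFactorial (m b) (a : ℕ) : ℚ))ᵀ
        = Matrix.of fun a b : Fin k =>
            (descPochhammer ℚ (b : ℕ)).eval ((m a : ℚ)) := by
      ext a b
      simp [Matrix.transpose_apply, descPochhammer_eval_eq_descFactorial]
    rw [this,
      ← Matrix.det_eval_matrixOfPolynomials_eq_det_vandermonde (fun j : Fin k => (m j : ℚ))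
        (fun j => descPochhammer ℚ (j : ℕ))
        (fun j => descPochhammer_natDegree ℚ (j : ℕ))
        (fun j => monic_descPochhammer ℚ (j : ℕ))]
  rw [show (Matrix.det fun a b : Fin k => ((Nat.descFactorial (m b) (a : ℕ)) : ℚ))
      = Matrix.det (Matrix.vandermonde fun j : Fin k => (m j : ℚ)) from hD,
    Matrix.det_vandermonde]
  have hpair : (∏ p ∈ Finset.univ.filter (fun p : Fin k × Fin k => p.1 < p.2),
        (((i p.2 : ℤ) - (i p.1 : ℤ) : ℤ) : ℚ))
      = ∏ a : Fin k, ∏ b ∈ Ioi a, ((m b : ℚ) - (m a : ℚ)) := by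
    have : ∀ a b : Fin k, (((i b : ℤ) - (i a : ℤ) : ℤ) : ℚ) = (m b : ℚ) - (m a : ℚ) := by
      intro a b
      have : ((m b : ℤ) : ℚ) - ((m a : ℤ) : ℚ) = (((i b : ℤ) - (i a : ℤ) : ℤ) : ℚ) := by
        rw [hm a, hm b]; push_cast; ring
      push_cast at this ⊢
      linarith
    simp_rw [this]
    rw [Finset.prod_sigma']
    refine Finset.prod_nbij' (fun p => ⟨p.1, p.2⟩) (fun p => (p.1, p.2)) ?_ ?_ ?_ ?_ ?_ <;> simp
  rw [hpair]
  rw [eq_div_iff (Finset.prod_ne_zero_iff.mpr fun j _ =>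
      (Nat.cast_ne_zero (R := ℚ)).mpr (Nat.factorial_ne_zero _)),
    mul_right_comm, ← Finset.prod_mul_distrib]
  have hone : ∀ j ∈ (Finset.univ : Finset (Fin k)),
      (1 / ((Nat.factorial (m j)) : ℚ)) * ((Nat.factorial ((i j : ℤ) - g + k).toNat : ℚ)) = 1 := by
    intro j _
    have : ((i j : ℤ) - g + k).toNat = m j := rfl
    rw [this]
    field_simp
  rw [Finset.prod_congr rfl hone, Finset.prod_const_one, one_mul]
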